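/- At the point (u0, v0) with u0 = (sqrt(15) + sqrt(5))/20 + i*(sqrt(15) - sqrt(5))/20 and v0 = (sqrt(15) + sqrt(5))/20 - i*(sqrt(15) - sqrt(5))/20, the implicit first-derivative relation for P(u,v) = 0 holds with v0' = (-294573*sqrt(3) + 82573*i)/516854; that is, (d/du P)(u0, v0) + v0' * (d/dv P)(u0, v0) = 0, where d/du P and d/dv P denote the formal partial derivatives of the polynomial P in u and v respectively. -/
import Mathlib


open Complex

/-- The Chan–Liaw level-3 degree-23 modular polynomial. -/
noncomputable def chanLiawP (u v : ℂ) : ℂ :=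
  (u^8 + v^8) - 12 * (Real.sqrt 3 : ℂ) * (u^7 * v + u * v^7) - 87 * (u^6 * v^2 + u^2 * v^6)
    - 84 * (Real.sqrt 3 : ℂ) * (u^5 * v^3 + u^3 * v^5) - 160 * (u^4 * v^4)
    - 2 * (u^4 + v^4) - 15 * (Real.sqrt 3 : ℂ) * (u^3 * v + u * v^3) - 48 * (u^2 * v^2) + 1

/-- The formal partial derivative `∂P/∂u` of the Chan–Liaw polynomial. -/
noncomputable def chanLiawP_u (u v : ℂ) : ℂ :=
  8 * u^7 - 12 * (Real.sqrt 3 : ℂ) * (7 * u^6 * v + v^7)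
    - 87 * (6 * u^5 * v^2 + 2 * u * v^6)
    - 84 * (Real.sqrt 3 : ℂ) * (5 * u^4 * v^3 + 3 * u^2 * v^5)
    - 640 * u^3 * v^4 - 8 * u^3
    - 15 * (Real.sqrt 3 : ℂ) * (3 * u^2 * v + v^3) - 96 * u * v^2

/-- The formal partial derivative `∂P/∂v` of the Chan–Liaw polynomial. -/
noncomputable def chanLiawP_v (u v : ℂ) : ℂ :=
  8 * v^7 - 12 * (Real.sqrt 3 : ℂ) * (u^7 + 7 * u * v^6)
    - 87 * (2 * u^6 * v + 6 * u^2 * v^5)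
    - 84 * (Real.sqrt 3 : ℂ) * (3 * u^5 * v^2 + 5 * u^3 * v^4)
    - 640 * u^4 * v^3 - 8 * v^3
    - 15 * (Real.sqrt 3 : ℂ) * (u^3 + 3 * u * v^2) - 96 * u^2 * v

/-- The implicit first-derivative relation `P_u(u₀,v₀) + v₀' ⬝ P_v(u₀,v₀) = 0` with
`v₀' = (-294573√3 + 82573 i)/516854`. -/
theorem implicit_first_derivative_relation :
    chanLiawP_u
        (((Real.sqrt 15 : ℂ) + (Real.sqrt 5 : ℂ))/20
          + I * (((Real.sqrt 15 : ℂ) - (Real.sqrt 5 : ℂ))/20))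
        (((Real.sqrt 15 : ℂ) + (Real.sqrt 5 : ℂ))/20
          - I * (((Real.sqrt 15 : ℂ) - (Real.sqrt 5 : ℂ))/20))
      + ((-294573 * (Real.sqrt 3 : ℂ) + 82573 * I) / 516854) *
        chanLiawP_v
          (((Real.sqrt 15 : ℂ) + (Real.sqrt 5 : ℂ))/20
            + I * (((Real.sqrt 15 : ℂ) - (Real.sqrt 5 : ℂ))/20))
          (((Real.sqrt 15 : ℂ) + (Real.sqrt 5 : ℂ))/20
            - I * (((Real.sqrt 15 : ℂ) - (Real.sqrt 5 : ℂ))/20)) = 0 := by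
  
  have h15 : (Real.sqrt 15 : ℂ) = (Real.sqrt 3 : ℂ) * (Real.sqrt 5 : ℂ) := by
    rw [show (15:ℝ) = 3*5 by norm_num, Real.sqrt_mul (by norm_num)]
    push_cast; ring
  have ha : (Real.sqrt 3 : ℂ)^2 = 3 := by
    norm_cast
    rw [Real.sq_sqrt]; norm_num
  have hb : (Real.sqrt 5 : ℂ)^2 = 5 := by
    norm_cast
    rw [Real.sq_sqrt]; norm_num
  have hI : (I:ℂ)^2 = -1 := I_sq
  simp only [chanLiawP_u, chanLiawP_v, h15]
  set a := ((Real.sqrt 3 : ℝ) : ℂ) with ha'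
  set b := ((Real.sqrt 5 : ℝ) : ℂ) with hb'
  linear_combination (norm := ring_nf)
    ((2707479/258427000 : ℂ) * b^3 + (2707479/258427000 : ℂ) * b^3 * I^1 + (-102115809/1292135000000 : ℂ) * b^7 + (-102115809/1292135000000 : ℂ) * b^7 * I^1 + (5534941/1033708000 : ℂ) * a^1 * b^3 + (-5534941/1033708000 : ℂ) * a^1 * b^3 * I^1 + (8567659/206741600000 : ℂ) * a^1 * b^7 + (-8567659/206741600000 : ℂ) * a^1 * b^7 * I^1 + (2153199/129213500 : ℂ) * a^2 * b^3 + (2153199/129213500 : ℂ) * a^2 * b^3 * I^1 + (-5296503/323033750000 : ℂ) * a^2 * b^7 + (-5296503/323033750000 : ℂ) * a^2 * b^7 * I^1 + (883719/206741600 : ℂ) * a^3 * b^3 + (-883719/206741600 : ℂ) * a^3 * b^3 * I^1 + (53104197/2584270000000 : ℂ) * a^3 * b^7 + (-53104197/2584270000000 : ℂ) * a^3 * b^7 * I^1 + (1058049/161516875000 : ℂ) * a^4 * b^7 + (1058049/161516875000 : ℂ) * a^4 * b^7 * I^1 + (10308737/1033708000000 : ℂ) * a^5 * b^7 + (-10308737/1033708000000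 : ℂ) * a^5 * b^7 * I^1 + (1899303/1292135000000 : ℂ) * a^6 * b^7 + (1899303/1292135000000 : ℂ) * a^6 * b^7 * I^1 + (883719/2584270000000 : ℂ) * a^7 * b^7 + (-883719/2584270000000 : ℂ) * a^7 * b^7 * I^1) * ha
    + ((0/1 : ℂ) * b^1 + (0/1 : ℂ) * b^1 * I^1 + (-76437/64606750 : ℂ) * b^3 + (-76437/64606750 : ℂ) * b^3 * I^1 + (-76437/323033750 : ℂ) * b^5 + (-76437/323033750 : ℂ) * b^5 * I^1 + (0/1 : ℂ) * a^1 * b^1 + (0/1 : ℂ) * a^1 * b^1 * I^1 + (37563/64606750 : ℂ) * a^1 * b^3 + (-37563/64606750 : ℂ) * a^1 * b^3 * I^1 + (37563/323033750 : ℂ) * a^1 * b^5 + (-37563/323033750 : ℂ) * a^1 * b^5 * I^1) * hb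
    + ((1617073/129213500 : ℂ) * b^3 + (7462259/516854000 : ℂ) * b^3 * I^1 + (-82573/39758000 : ℂ) * b^3 * I^2 + (-31040273/20674160000000 : ℂ) * b^7 + (-26035223/41348320000000 : ℂ) * b^7 * I^1 + (31040273/20674160000000 : ℂ) * b^7 * I^2 + (-33402987/41348320000000 : ℂ) * b^7 * I^3 + (6853559/41348320000000 : ℂ) * b^7 * I^4 + (83/80000000 : ℂ) * b^7 * I^5 + (-6853559/41348320000000 : ℂ) * b^7 * I^6 + (-1599897/79516000 : ℂ) * a^1 * b^3 + (-203373/5018000 : ℂ) * a^1 * b^3 * I^1 + (7679289/1033708000 : ℂ) * a^1 * b^3 * I^2 + (31879793/41348320000000 : ℂ) * a^1 * b^7 + (-384469817/41348320000000 : ℂ) * a^1 * b^7 * I^1 + (-31879793/41348320000000 : ℂ) * a^1 * b^7 * I^2 + (1137327/161516875000 : ℂ) * a^1 * b^7 * I^3 + (-51938417/41348320000000 : ℂ) * a^1 * b^7 * I^4 + (-300651607/41348320000000 : ℂ) * a^1 * b^7 * I^5 + (51938417/41348320000000 : ℂ) * a^1 * b^7 * I^6 + (4669107/1033708000 : ℂ)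 * a^2 * b^3 + (34691439/1033708000 : ℂ) * a^2 * b^3 * I^1 + (-10156479/1033708000 : ℂ) * a^2 * b^3 * I^2 + (344595687/41348320000000 : ℂ) * a^2 * b^7 + (81706113/3180640000000 : ℂ) * a^2 * b^7 * I^1 + (-344595687/41348320000000 : ℂ) * a^2 * b^7 * I^2 + (-458870367/20674160000000 : ℂ) * a^2 * b^7 * I^3 + (171669267/41348320000000 : ℂ) * a^2 * b^7 * I^4 + (889253049/41348320000000 : ℂ) * a^2 * b^7 * I^5 + (-171669267/41348320000000 : ℂ) * a^2 * b^7 * I^6 + (7256689/1033708000 : ℂ) * a^3 * b^3 + (1022159/1033708000 : ℂ) * a^3 * b^3 * I^1 + (5862683/1033708000 : ℂ) * a^3 * b^3 * I^2 + (-574562779/41348320000000 : ℂ) * a^3 * b^7 + (-231715561/8269664000000 : ℂ) * a^3 * b^7 * I^1 + (574562779/41348320000000 : ℂ) * a^3 * b^7 * I^2 + (35963003/1033708000000 : ℂ) * a^3 * b^7 * I^3 + (-24854473/3180640000000 : ℂ) * a^3 * b^7 * I^4 + (-282006487/8269664000000 : ℂ) * a^3 * b^7 * I^5 + (24854473/3180640000000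 : ℂ) * a^3 * b^7 * I^6 + (-4063719/1033708000 : ℂ) * a^4 * b^3 + (-13161873/1033708000 : ℂ) * a^4 * b^3 * I^1 + (-247719/206741600 : ℂ) * a^4 * b^3 * I^2 + (10936903/1653932800000 : ℂ) * a^4 * b^7 + (1111936811/41348320000000 : ℂ) * a^4 * b^7 * I^1 + (-10936903/1653932800000 : ℂ) * a^4 * b^7 * I^2 + (-297155939/10337080000000 : ℂ) * a^4 * b^7 * I^3 + (75719441/8269664000000 : ℂ) * a^4 * b^7 * I^4 + (93623957/3180640000000 : ℂ) * a^4 * b^7 * I^5 + (-75719441/8269664000000 : ℂ) * a^4 * b^7 * I^6 + (883719/206741600 : ℂ) * a^5 * b^3 * I^1 + (-31192749/41348320000000 : ℂ) * a^5 * b^7 + (-670028667/41348320000000 : ℂ) * a^5 * b^7 * I^1 + (31192749/41348320000000 : ℂ) * a^5 * b^7 * I^2 + (24380397/2584270000000 : ℂ) * a^5 * b^7 * I^3 + (-282647379/41348320000000 : ℂ) * a^5 * b^7 * I^4 + (-418574037/41348320000000 : ℂ) * a^5 * b^7 * I^5 + (282647379/41348320000000 : ℂ) * a^5 * b^7 *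 I^6 + (98514917/41348320000000 : ℂ) * a^6 * b^7 + (-219735953/41348320000000 : ℂ) * a^6 * b^7 * I^1 + (-98514917/41348320000000 : ℂ) * a^6 * b^7 * I^2 + (88773239/20674160000000 : ℂ) * a^6 * b^7 * I^3 + (131208497/41348320000000 : ℂ) * a^6 * b^7 * I^4 + (-187042373/41348320000000 : ℂ) * a^6 * b^7 * I^5 + (-131208497/41348320000000 : ℂ) * a^6 * b^7 * I^6 + (-118416297/41348320000000 : ℂ) * a^7 * b^7 + (25794837/3180640000000 : ℂ) * a^7 * b^7 * I^1 + (118416297/41348320000000 : ℂ) * a^7 * b^7 * I^2 + (-30252347/5168540000000 : ℂ) * a^7 * b^7 * I^3 + (-34598087/41348320000000 : ℂ) * a^7 * b^7 * I^4 + (251514671/41348320000000 : ℂ) * a^7 * b^7 * I^5 + (34598087/41348320000000 : ℂ) * a^7 * b^7 * I^6 + (2910723/3180640000000 : ℂ) * a^8 * b^7 + (-161853/103370800000 : ℂ) * a^8 * b^7 * I^1 + (-2910723/3180640000000 : ℂ) * a^8 * b^7 * I^2 + (19723419/8269664000000 : ℂ) * a^8 * b^7 * I^3 + (247719/2584270000000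 : ℂ) * a^8 * b^7 * I^4 + (-19723419/8269664000000 : ℂ) * a^8 * b^7 * I^5 + (-247719/2584270000000 : ℂ) * a^8 * b^7 * I^6 + (883719/2584270000000 : ℂ) * a^9 * b^7 * I^1 + (-883719/2584270000000 : ℂ) * a^9 * b^7 * I^3 + (883719/2584270000000 : ℂ) * a^9 * b^7 * I^5) * hI
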